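/- Let Q = {(u, x) ∈ Q^p × Q^q | A u + B x ≤ c}. Let C = {y ∈ Q^m | yᵀA = 0, y ≥ 0} be the projection cone of Q with respect to u. Then the projection proj(Q; x) = {x | ∃u, (u,x) ∈ Q} is represented by the system { yᵀB x ≤ yᵀc : y ∈ ExtremeRays(C) }, i.e., x ∈ proj(Q; x) if and only if yᵀB x ≤ yᵀc for every extreme ray y of C. -/

import Mathlib

open Matrix

/-- `r` is an extreme ray of the convex cone `C`: a nonzero element of `C`
such that whenever `r` is the sum of two elements of `C`, each summand is a
scalar multiple of `r`. -/
def IsExtremeRayOfSet {m : ℕ} (C : Set (Fin m → ℚ)) (r : Fin m → ℚ) : Prop :=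
  r ∈ C ∧ r ≠ 0 ∧ ∀ x ∈ C, ∀ y ∈ C, x + y = r → ∃ lam : ℚ, x = lam • r

section Aux
open Finset

private lemma dot_cons {p : ℕ} (v : Fin (p+1) → ℚ) (x : ℚ) (w : Fin p → ℚ) :
    v ⬝ᵥ Fin.cons x w = v 0 * x + Fin.tail v ⬝ᵥ w := by
  simp [dotProduct, Fin.sum_univ_succ, Fin.tail]

theorem myFarkas : ∀ (p : ℕ) {ι : Type} [Fintype ι] [DecidableEq ι]
    (a : ι → Fin p → ℚ) (b : ι → ℚ),
    (∃ u : Fin p → ℚ, ∀ i, a i ⬝ᵥ u ≤ b i) ∨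
    (∃ y : ι → ℚ, (∀ i, 0 ≤ y i) ∧ (∀ j, ∑ i, y i * a i j = 0) ∧ ∑ i, y i * b i < 0) := by
  intro p
  induction p with
  | zero =>
    intro ι _ _ a b
    by_cases hb : ∀ i, 0 ≤ b i
    · left
      exact ⟨0, fun i => by simpa [dotProduct] using hb i⟩
    · right
      push_neg at hb
      obtain ⟨i, hi⟩ := hb
      refine ⟨fun l => if l = i then 1 else 0, ?_, ?_, ?_⟩
      · intro l; dsimp only; split <;> norm_num
      · intro j; exact j.elim0
      · simp [ite_mul, Finset.sum_ite_eq', hi]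
  | succ p ih =>
    intro ι _ _ a b
    set α : ι → ℚ := fun i => a i 0 with hα
    set t : ι → Fin p → ℚ := fun i => Fin.tail (a i) with ht
    -- new index type
    set ι' := ({i : ι // 0 < α i} × {j : ι // α j < 0}) ⊕ {k : ι // α k = 0} with hι'
    set row : ι' → Fin p → ℚ := fun r =>
      match r with
      | .inl (i, j) => (-α j.1) • t i.1 + (α i.1) • t j.1
      | .inr k => t k.1 with hrow
    set rhs : ι' → ℚ := fun r =>
      match r with
      | .inl (i, j) => (-α j.1) * b i.1 + (α i.1) * b j.1
      | .inr k => b k.1 with hrhs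
    rcases ih row rhs with ⟨u', hu'⟩ | ⟨y', hy'0, hy'A, hy'b⟩
    · -- feasible case
      left
      set ub : ι → ℚ := fun i => (b i - t i ⬝ᵥ u') / α i with hub
      have key : ∀ i j, 0 < α i → α j < 0 → ub j ≤ ub i := by
        intro i j hi hj
        have h := hu' (.inl (⟨i, hi⟩, ⟨j, hj⟩))
        simp only [hrow, hrhs, add_dotProduct, smul_dotProduct, smul_eq_mul] at h
        rw [hub]
        rw [le_div_iff₀ hi, div_mul_eq_mul_div, div_le_iff_of_neg hj]
        nlinarith
      set NS : Finset ι := univ.filter fun j => α j < 0 with hNS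
      set PS : Finset ι := univ.filter fun i => 0 < α i with hPS
      set u0 : ℚ :=
        if hN : NS.Nonempty then NS.sup' hN ub
        else if hP : PS.Nonempty then PS.inf' hP ub else 0 with hu0
      refine ⟨Fin.cons u0 u', fun i => ?_⟩
      rw [dot_cons]
      rcases lt_trichotomy (α i) 0 with hi | hi | hi
      · -- lower bound constraint
        have hiN : i ∈ NS := by simp [hNS, hi]
        have h1 : ub i ≤ u0 := by
          rw [hu0, dif_pos ⟨i, hiN⟩]
          exact Finset.le_sup' ub hiN
        have h2 : α i * u0 ≤ α i * ub i := mul_le_mul_of_nonpos_left h1 (le_of_lt hi)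
        have h3 : α i * ub i = b i - t i ⬝ᵥ u' := by
          rw [hub]; dsimp only; rw [← mul_div_assoc]; exact mul_div_cancel_left₀ _ (ne_of_lt hi)
        have : a i 0 = α i := rfl
        rw [this]
        linarith
      · have h := hu' (.inr ⟨i, hi⟩)
        simp only [hrow, hrhs] at h
        have : a i 0 = α i := rfl
        rw [this, hi]
        linarith
      · have hiP : i ∈ PS := by simp [hPS, hi]
        have h1 : u0 ≤ ub i := by
          rw [hu0]
          by_cases hN : NS.Nonempty
          · rw [dif_pos hN]
            apply Finset.sup'_le
            intro j hj
            have hj' : α j < 0 := by simpa [hNS] using hj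
            exact key i j hi hj'
          · rw [dif_neg hN, dif_pos ⟨i, hiP⟩]
            exact Finset.inf'_le ub hiP
        have h2 : α i * u0 ≤ α i * ub i := by
          exact mul_le_mul_of_nonneg_left h1 (le_of_lt hi)
        have h3 : α i * ub i = b i - t i ⬝ᵥ u' := by
          rw [hub]; dsimp only; rw [← mul_div_assoc]; exact mul_div_cancel_left₀ _ (ne_of_gt hi)
        have : a i 0 = α i := rfl
        rw [this]
        linarith
    · -- infeasible case
      right
      set w : ι' → ι → ℚ := fun r l =>
        match r with
        | .inl (i, j) => (if l = i.1 then -α j.1 else 0) + (if l = j.1 then α i.1 else 0)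
        | .inr k => if l = k.1 then 1 else 0 with hw
      refine ⟨fun l => ∑ r, y' r * w r l, ?_, ?_, ?_⟩
      · intro l
        apply Finset.sum_nonneg
        intro r _
        apply mul_nonneg (hy'0 r)
        rcases r with ⟨i, j⟩ | k
        · simp only [hw]
          have := i.2; have := j.2
          split <;> split <;> linarith
        · simp only [hw]; split <;> norm_num
      · -- linear combination vanishes
        have hswap : ∀ g : ι → ℚ,
            ∑ l, (∑ r, y' r * w r l) * g l = ∑ r, y' r * ∑ l, w r l * g l := by
          intro g
          simp_rw [Finset.sum_mul, Finset.mul_sum, mul_assoc]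
          exact Finset.sum_comm
        have hwsum : ∀ (g : ι → ℚ) (r : ι'), ∑ l, w r l * g l =
            (match r with
             | .inl (i, j) => (-α j.1) * g i.1 + (α i.1) * g j.1
             | .inr k => g k.1) := by
          intro g r
          rcases r with ⟨i, j⟩ | k <;>
            simp [hw, add_mul, ite_mul, Finset.sum_add_distrib, Finset.sum_ite_eq']
        intro v
        refine Fin.cases ?_ ?_ v
        · rw [hswap (fun l => a l 0)]
          apply Finset.sum_eq_zero
          intro r _
          rw [hwsum]
          rcases r with ⟨i, j⟩ | k
          · show y' _ * ((-α j.1) * α i.1 + α i.1 * α j.1) = 0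
            ring
          · show y' _ * α k.1 = 0
            rw [k.2, mul_zero]
        · intro jj
          have : ∀ l, a l jj.succ = t l jj := fun l => rfl
          calc ∑ l, (∑ r, y' r * w r l) * a l jj.succ
              = ∑ r, y' r * ∑ l, w r l * a l jj.succ := hswap _
            _ = ∑ r, y' r * row r jj := by
                apply Finset.sum_congr rfl
                intro r _
                rw [hwsum (fun l => a l jj.succ) r]
                rcases r with ⟨i, j⟩ | k <;> simp [hrow, this]
            _ = 0 := hy'A jj
      · have hswap : ∀ g : ι → ℚ,
            ∑ l, (∑ r, y' r * w r l) * g l = ∑ r, y' r * ∑ l, w r l * g l := by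
          intro g
          simp_rw [Finset.sum_mul, Finset.mul_sum, mul_assoc]
          exact Finset.sum_comm
        have hwsum : ∀ (r : ι'), ∑ l, w r l * b l = rhs r := by
          intro r
          rcases r with ⟨i, j⟩ | k <;>
            simp [hw, hrhs, add_mul, ite_mul, Finset.sum_add_distrib, Finset.sum_ite_eq']
        calc ∑ l, (∑ r, y' r * w r l) * b l = ∑ r, y' r * ∑ l, w r l * b l := hswap b
          _ = ∑ r, y' r * rhs r := by simp_rw [hwsum]
          _ < 0 := hy'b


private lemma shrink {m p : ℕ} (A : Matrix (Fin m) (Fin p) ℚ) (y d : Fin m → ℚ)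
    (hyA : vecMul y A = 0) (hy0 : 0 ≤ y) (hdA : vecMul d A = 0)
    (hsupp : ∀ l, y l = 0 → d l = 0) (k₀ : Fin m) (hk₀ : d k₀ < 0) :
    ∃ t : ℚ, 0 < t ∧ vecMul (y + t • d) A = 0 ∧ 0 ≤ y + t • d ∧
      (Finset.univ.filter fun l => (y + t • d) l ≠ 0) ⊂
        (Finset.univ.filter fun l => y l ≠ 0) := by
  set S : Finset (Fin m) := univ.filter fun k => d k < 0 with hS
  have hSne : S.Nonempty := ⟨k₀, by simp [hS, hk₀]⟩
  obtain ⟨k₁, hk₁S, hk₁min⟩ := S.exists_min_image (fun k => y k / (-(d k))) hSne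
  have hdk₁ : d k₁ < 0 := by simpa [hS] using hk₁S
  have hyk₁ : 0 < y k₁ := by
    rcases lt_or_eq_of_le (hy0 k₁) with h | h
    · exact h
    · exact absurd (hsupp k₁ h.symm) (ne_of_lt hdk₁)
  set t : ℚ := y k₁ / (-(d k₁)) with htdef
  have ht : 0 < t := div_pos hyk₁ (by linarith)
  have hnn : 0 ≤ y + t • d := by
    intro k
    simp only [Pi.add_apply, Pi.smul_apply, smul_eq_mul, Pi.zero_apply]
    by_cases hdk : d k < 0
    · have hkS : k ∈ S := by simp [hS, hdk]
      have hmin := hk₁min k hkS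
      have h2 : t * (-(d k)) ≤ y k := by
        rw [htdef]
        calc y k₁ / (-(d k₁)) * (-(d k)) ≤ y k / (-(d k)) * (-(d k)) := by
              apply mul_le_mul_of_nonneg_right hmin (by linarith)
          _ = y k := div_mul_cancel₀ _ (by linarith)
      nlinarith
    · push_neg at hdk
      have hyk := hy0 k
      simp only [Pi.zero_apply] at hyk
      nlinarith
  have hzero : (y + t • d) k₁ = 0 := by
    simp only [Pi.add_apply, Pi.smul_apply, smul_eq_mul]
    rw [htdef]
    have hne : d k₁ ≠ 0 := ne_of_lt hdk₁
    rw [div_neg, neg_mul, div_mul_cancel₀ _ hne, add_neg_cancel]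
  refine ⟨t, ht, ?_, hnn, ?_⟩
  · rw [add_vecMul, smul_vecMul, hyA, hdA, smul_zero, add_zero]
  · constructor
    · intro l hl
      simp only [mem_filter, mem_univ, true_and] at hl ⊢
      intro hyl
      exact hl (by simp [Pi.add_apply, hyl, hsupp l hyl])
    · intro hsub
      have hk₁mem : k₁ ∈ univ.filter fun l => y l ≠ 0 := by
        simp [ne_of_gt hyk₁]
      have := hsub hk₁mem
      simp only [mem_filter, mem_univ, true_and] at this
      exact this hzero

private lemma cone_step {m p : ℕ} (A : Matrix (Fin m) (Fin p) ℚ) (w : Fin m → ℚ)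
    (n : ℕ)
    (ih : ∀ y : Fin m → ℚ, (univ.filter fun l => y l ≠ 0).card ≤ n →
      vecMul y A = 0 → 0 ≤ y → 0 ≤ y ⬝ᵥ w)
    (y : Fin m → ℚ) (hyA : vecMul y A = 0) (hy0 : 0 ≤ y)
    (hcard : (univ.filter fun l => y l ≠ 0).card ≤ n + 1)
    (d : Fin m → ℚ) (hdA : vecMul d A = 0) (hsupp : ∀ l, y l = 0 → d l = 0)
    (i j : Fin m) (hdi : d i < 0) (hdj : 0 < d j) :
    0 ≤ y ⬝ᵥ w := by
  obtain ⟨t₁, ht₁, h₁A, h₁0, h₁ss⟩ := shrink A y d hyA hy0 hdA hsupp i hdi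
  have hdA' : vecMul (-d) A = 0 := by rw [neg_vecMul, hdA, neg_zero]
  have hsupp' : ∀ l, y l = 0 → (-d) l = 0 := fun l hl => by
    simp [hsupp l hl]
  have hdj' : (-d) j < 0 := by simpa using hdj
  obtain ⟨t₂, ht₂, h₂A, h₂0, h₂ss⟩ := shrink A y (-d) hyA hy0 hdA' hsupp' j hdj'
  have hc₁ : (univ.filter fun l => (y + t₁ • d) l ≠ 0).card ≤ n := by
    have := Finset.card_lt_card h₁ss
    omega
  have hc₂ : (univ.filter fun l => (y + t₂ • (-d)) l ≠ 0).card ≤ n := by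
    have := Finset.card_lt_card h₂ss
    omega
  have hw₁ := ih _ hc₁ h₁A h₁0
  have hw₂ := ih _ hc₂ h₂A h₂0
  rw [add_dotProduct, smul_dotProduct, smul_eq_mul] at hw₁ hw₂
  rw [neg_dotProduct] at hw₂
  nlinarith

private lemma cone_nonneg {m p : ℕ} (A : Matrix (Fin m) (Fin p) ℚ) (w : Fin m → ℚ)
    (hw : ∀ r, IsExtremeRayOfSet {y : Fin m → ℚ | Matrix.vecMul y A = 0 ∧ 0 ≤ y} r →
      0 ≤ r ⬝ᵥ w) :
    ∀ y, Matrix.vecMul y A = 0 → 0 ≤ y → 0 ≤ y ⬝ᵥ w := by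
  suffices h : ∀ n : ℕ, ∀ y : Fin m → ℚ,
      (Finset.univ.filter fun l => y l ≠ 0).card ≤ n →
      Matrix.vecMul y A = 0 → 0 ≤ y → 0 ≤ y ⬝ᵥ w by
    intro y hyA hy0
    exact h _ y le_rfl hyA hy0
  intro n
  induction n with
  | zero =>
    intro y hcard hyA hy0
    have : y = 0 := by
      funext l
      rw [Pi.zero_apply]
      by_contra hl
      have hmem : l ∈ Finset.univ.filter fun l => y l ≠ 0 := by simp [hl]
      have := Finset.card_pos.mpr ⟨l, hmem⟩
      omega
    simp [this]
  | succ n ih =>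
    intro y hcard hyA hy0
    by_cases hy : y = 0
    · simp [hy]
    by_cases hray : IsExtremeRayOfSet {y : Fin m → ℚ | Matrix.vecMul y A = 0 ∧ 0 ≤ y} y
    · exact hw y hray
    rw [IsExtremeRayOfSet] at hray
    push_neg at hray
    obtain ⟨a, ha, b', hb', hab, hlam⟩ := hray ⟨hyA, hy0⟩ hy
    obtain ⟨haA, ha0⟩ := ha
    obtain ⟨hb'A, hb'0⟩ := hb'
    have haley : ∀ l, a l ≤ y l := by
      intro l
      have h1 := hb'0 l
      have h2 := congrFun hab l
      simp only [Pi.add_apply, Pi.zero_apply] at h1 h2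
      linarith
    have hazero : ∀ l, y l = 0 → a l = 0 := by
      intro l hl
      have h1 := ha0 l
      have h2 := haley l
      simp only [Pi.zero_apply] at h1
      linarith
    have hij : ∃ i j, y i ≠ 0 ∧ y j ≠ 0 ∧ a i * y j ≠ a j * y i := by
      by_contra hc
      push_neg at hc
      obtain ⟨i₀, hi₀⟩ : ∃ i₀, y i₀ ≠ 0 := by
        by_contra hc2; push_neg at hc2
        exact hy (funext fun l => hc2 l)
      apply hlam (a i₀ / y i₀)
      funext l
      by_cases hyl : y l = 0
      · simp [hazero l hyl, Pi.smul_apply, hyl]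
      · have hcl := hc l i₀ hyl hi₀
        simp only [Pi.smul_apply, smul_eq_mul]
        rw [div_mul_eq_mul_div, eq_div_iff hi₀]
        linarith
    obtain ⟨i, j, hyi, hyj, hcross⟩ := hij
    have hyi' : 0 < y i := lt_of_le_of_ne (hy0 i) (Ne.symm hyi)
    have hyj' : 0 < y j := lt_of_le_of_ne (hy0 j) (Ne.symm hyj)
    have hratio : a i / y i ≠ a j / y j := by
      intro h
      apply hcross
      rw [div_eq_div_iff (ne_of_gt hyi') (ne_of_gt hyj')] at h
      linarith
    set s : ℚ := (a i / y i + a j / y j) / 2 with hs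
    set d : Fin m → ℚ := a - s • y with hd
    have hdA : vecMul d A = 0 := by
      rw [hd, sub_vecMul, smul_vecMul, haA, hyA, smul_zero, sub_zero]
    have hsupp : ∀ l, y l = 0 → d l = 0 := by
      intro l hl
      simp [hd, hazero l hl, hl]
    have hdval : ∀ l, d l = a l - s * y l := fun l => rfl
    rcases lt_or_gt_of_ne hratio with hlt | hgt
    · have hdi : d i < 0 := by
        rw [hdval]
        have h1 : a i / y i < s := by rw [hs]; linarith
        have h2 : a i < s * y i := by
          rw [div_lt_iff₀ hyi'] at h1; linarith
        linarith
      have hdj : 0 < d j := by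
        rw [hdval]
        have h1 : s < a j / y j := by rw [hs]; linarith
        have h2 : s * y j < a j := by
          rw [lt_div_iff₀ hyj'] at h1; linarith
        linarith
      exact cone_step A w n ih y hyA hy0 hcard d hdA hsupp i j hdi hdj
    · have hdj : d j < 0 := by
        rw [hdval]
        have h1 : a j / y j < s := by rw [hs]; linarith
        have h2 : a j < s * y j := by
          rw [div_lt_iff₀ hyj'] at h1; linarith
        linarith
      have hdi : 0 < d i := by
        rw [hdval]
        have h1 : s < a i / y i := by rw [hs]; linarith
        have h2 : s * y i < a i := by
          rw [lt_div_iff₀ hyi'] at h1; linarith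
        linarith
      exact cone_step A w n ih y hyA hy0 hcard d hdA hsupp j i hdj hdi

end Aux

/-- Projection lemma for block elimination: with
`C = {y | yᵀA = 0, y ≥ 0}` the projection cone and `E` a set of
representatives of the extreme rays of `C`, a point `x` lies in
`proj(Q; x) = {x | ∃u, A u + B x ≤ c}` iff `yᵀB x ≤ yᵀc` for all `y ∈ E`. -/
theorem projection_lemma (m p q : ℕ) (A : Matrix (Fin m) (Fin p) ℚ)
    (B : Matrix (Fin m) (Fin q) ℚ) (c : Fin m → ℚ) (E : Set (Fin m → ℚ))
    (hE1 : ∀ y ∈ E, IsExtremeRayOfSet {y : Fin m → ℚ | Matrix.vecMul y A = 0 ∧ 0 ≤ y} y)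
    (hE2 : ∀ y : Fin m → ℚ,
      IsExtremeRayOfSet {y : Fin m → ℚ | Matrix.vecMul y A = 0 ∧ 0 ≤ y} y →
        ∃ z ∈ E, ∃ lam : ℚ, 0 < lam ∧ y = lam • z)
    (x : Fin q → ℚ) :
    (∃ u : Fin p → ℚ, A.mulVec u + B.mulVec x ≤ c) ↔
      ∀ y ∈ E, Matrix.vecMul y B ⬝ᵥ x ≤ y ⬝ᵥ c := by
  constructor
  · rintro ⟨u, hu⟩ y hyE
    obtain ⟨⟨hyA, hy0⟩, -, -⟩ := hE1 y hyE
    rw [← Matrix.dotProduct_mulVec]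
    have h1 : y ⬝ᵥ (A.mulVec u + B.mulVec x) ≤ y ⬝ᵥ c := by
      simp only [dotProduct]
      apply Finset.sum_le_sum
      intro i _
      exact mul_le_mul_of_nonneg_left (hu i) (hy0 i)
    have h2 : y ⬝ᵥ (A.mulVec u + B.mulVec x)
        = y ⬝ᵥ A.mulVec u + y ⬝ᵥ B.mulVec x := dotProduct_add y _ _
    have h3 : y ⬝ᵥ A.mulVec u = 0 := by
      rw [Matrix.dotProduct_mulVec, hyA, zero_dotProduct]
    linarith
  · intro h
    rcases myFarkas p (fun i => A i) (fun i => c i - B.mulVec x i) with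
      ⟨u, hu⟩ | ⟨y, hy0, hyA, hyb⟩
    · refine ⟨u, fun i => ?_⟩
      have := hu i
      simp only [Pi.add_apply, Matrix.mulVec] at *
      linarith
    · exfalso
      have hyA' : Matrix.vecMul y A = 0 := by
        funext j
        simpa [Matrix.vecMul, dotProduct] using hyA j
      have hy0' : (0 : Fin m → ℚ) ≤ y := fun i => hy0 i
      have hw : ∀ r, IsExtremeRayOfSet {y : Fin m → ℚ | Matrix.vecMul y A = 0 ∧ 0 ≤ y} r →
          0 ≤ r ⬝ᵥ (c - B.mulVec x) := by
        intro r hr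
        obtain ⟨z, hzE, lam, hlam, rfl⟩ := hE2 r hr
        have hz := h z hzE
        rw [← Matrix.dotProduct_mulVec] at hz
        rw [smul_dotProduct, smul_eq_mul, dotProduct_sub]
        have : 0 ≤ z ⬝ᵥ c - z ⬝ᵥ B.mulVec x := by linarith
        positivity
      have := cone_nonneg A (c - B.mulVec x) hw y hyA' hy0'
      rw [dotProduct_sub] at this
      have heq : y ⬝ᵥ c - y ⬝ᵥ B.mulVec x = ∑ i, y i * (c i - B.mulVec x i) := by
        simp only [dotProduct, ← Finset.sum_sub_distrib, mul_sub]
      rw [heq] at this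
      linarith
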